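/- Let B, k, a, m², α, Φ, Ψ, δU, δV be real numbers with a ≠ 0 and α ≠ 0, satisfying: (i) -2B(k²/a²)(Ψ + Φ) - (3m²/2)δU - 2α(k²/a²)δV = 0; (ii) δU = -2(Ψ + 2Φ); (iii) (k²/a²)δV = (m²/α)Ψ. Then (2Bk² - 6m²a²)Φ = -(2Bk² - m²a²)Ψ. Consequently, if Ψ ≠ 0 and 2Bk² ≠ 6m²a², the gravitational slip is η := -Φ/Ψ = (2Bk² - m²a²)/(2Bk² - 6m²a²); in particular η → 1 (the general-relativistic value Φ = -Ψ) as m² → 0. -/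

import Mathlib

/-- Quasi-static perturbations in VAAS gravity: from the perturbed field
equation and the equations for δU, δV one gets
(2Bk² - 6m²a²)Φ = -(2Bk² - m²a²)Ψ, hence the gravitational slip
η = -Φ/Ψ = (2Bk² - m²a²)/(2Bk² - 6m²a²), which reduces to the GR value 1
when m² = 0. -/
theorem stmt12 (B k a m2 α Φ Ψ δU δV : ℝ) (ha : a ≠ 0) (hα : α ≠ 0)
    (e1 : -2*B*(k^2/a^2)*(Ψ + Φ) - (3*m2/2)*δU - 2*α*(k^2/a^2)*δV = 0)
    (e2 : δU = -2*(Ψ + 2*Φ))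
    (e3 : (k^2/a^2)*δV = (m2/α)*Ψ) :
    ((2*B*k^2 - 6*m2*a^2)*Φ = -(2*B*k^2 - m2*a^2)*Ψ) ∧
    (Ψ ≠ 0 → 2*B*k^2 ≠ 6*m2*a^2 →
      -Φ/Ψ = (2*B*k^2 - m2*a^2)/(2*B*k^2 - 6*m2*a^2)) ∧
    (m2 = 0 → 2*B*k^2 ≠ 0 →
      (2*B*k^2 - m2*a^2)/(2*B*k^2 - 6*m2*a^2) = 1) := by
  have ha2 : a^2 ≠ 0 := pow_ne_zero _ ha
  subst e2
  have key : (2*B*k^2 - 6*m2*a^2)*Φ = -(2*B*k^2 - m2*a^2)*Ψ := by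
    have h3 : (k^2/a^2)*δV*α = m2*Ψ := by
      rw [e3]; field_simp
    have hK : k^2 = (k^2/a^2) * a^2 := (div_mul_cancel₀ _ ha2).symm
    rw [hK]
    linear_combination (-a^2)*e1 - 2*a^2*h3
  refine ⟨key, ?_, ?_⟩
  · intro hΨ hne
    have h6 : 2*B*k^2 - 6*m2*a^2 ≠ 0 := sub_ne_zero.mpr hne
    rw [div_eq_div_iff hΨ h6]
    linarith [key]
  · intro hm h0
    subst hm
    field_simp
    simp only [zero_mul, mul_zero, sub_zero]; exact div_self h0
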